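/- Let L be an algebraically closed field of characteristic zero and let A, B, w ∈ L[x,y]. Suppose Jac(A,B) is a unit of L[x,y] and Jac(A,w) = 0. Then w lies in L[A], the L-subalgebra of L[x,y] generated by A. -/

import Mathlib

open MvPolynomial

/-- The Jacobian of two polynomials `p, q ∈ R[x,y]`:
`Jac(p,q) = (∂p/∂x)(∂q/∂y) − (∂p/∂y)(∂q/∂x)`. -/
noncomputable def Jac {R : Type*} [CommRing R]
    (p q : MvPolynomial (Fin 2) R) : MvPolynomial (Fin 2) R :=
  pderiv 0 p * pderiv 1 q - pderiv 1 p * pderiv 0 q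

namespace CMWAux

variable {σ : Type*} {R : Type*}

lemma coeff_pderiv [CommSemiring R] [DecidableEq σ] (i : σ) (f : MvPolynomial σ R) (u : σ →₀ ℕ) :
    coeff u (pderiv i f) = ((u i + 1 : ℕ) : R) * coeff (u + Finsupp.single i 1) f := by
  induction f using MvPolynomial.induction_on' with
  | add p q hp hq => simp [hp, hq, mul_add]
  | monomial s a =>
    rw [pderiv_monomial, coeff_monomial, coeff_monomial]
    by_cases h : s = u + Finsupp.single i 1
    · subst h
      have h1 : (u + Finsupp.single i 1) - Finsupp.single i 1 = u := by
        simp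
      have h2 : (u + Finsupp.single i 1 : σ →₀ ℕ) i = u i + 1 := by
        simp
      rw [if_pos h1, if_pos rfl, h2]
      push_cast
      ring
    · rw [if_neg h, mul_zero]
      by_cases hsi : s i = 0
      · simp [hsi]
      · have hcond : ¬(s - Finsupp.single i 1 = u) := by
          intro hc
          apply h
          rw [← hc, tsub_add_cancel_of_le]
          rw [Finsupp.single_le_iff]
          omega
        rw [if_neg hcond]

lemma pderiv_comm' [CommSemiring R] [DecidableEq σ] (i j : σ) (f : MvPolynomial σ R) :
    pderiv i (pderiv j f) = pderiv j (pderiv i f) := by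
  ext u
  rw [coeff_pderiv, coeff_pderiv, coeff_pderiv, coeff_pderiv]
  rw [show u + Finsupp.single j 1 + Finsupp.single i 1
      = u + Finsupp.single i 1 + Finsupp.single j 1 by rw [add_right_comm]]
  by_cases h : i = j
  · subst h; ring
  · have h1 : (u + Finsupp.single i 1 : σ →₀ ℕ) j = u j := by
      simp [Finsupp.single_apply, h]
    have h2 : (u + Finsupp.single j 1 : σ →₀ ℕ) i = u i := by
      simp [Finsupp.single_apply, (Ne.symm h : j ≠ i)]
    rw [h1, h2]; ring

lemma sum_add_single [DecidableEq σ] (u : σ →₀ ℕ) (i : σ) :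
    ((u + Finsupp.single i 1).sum fun _ e => e) = (u.sum fun _ e => e) + 1 := by
  rw [Finsupp.sum_add_index' (fun _ => rfl) (fun _ _ _ => rfl), Finsupp.sum_single_index rfl]

lemma totalDegree_pderiv_lt [CommSemiring R] [DecidableEq σ] {i : σ} {f : MvPolynomial σ R}
    (h : pderiv i f ≠ 0) : (pderiv i f).totalDegree < f.totalDegree := by
  obtain ⟨u, hu, hsum⟩ : ∃ u ∈ (pderiv i f).support,
      (pderiv i f).totalDegree = (u.sum fun _ e => e) :=
    Finset.exists_mem_eq_sup _ (support_nonempty.mpr h) _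
  have hc : coeff (u + Finsupp.single i 1) f ≠ 0 := by
    intro h0
    apply mem_support_iff.mp hu
    rw [coeff_pderiv, h0, mul_zero]
  have hle := le_totalDegree (mem_support_iff.mpr hc)
  rw [sum_add_single] at hle
  omega

lemma eq_C_of_pderiv_eq_zero {L : Type*} [CommRing L] [NoZeroDivisors L] [CharZero L]
    [DecidableEq σ] {f : MvPolynomial σ L}
    (h : ∀ i : σ, pderiv i f = 0) : f = C (coeff 0 f) := by
  ext m
  rw [coeff_C]
  by_cases hm : (0 : σ →₀ ℕ) = m
  · rw [if_pos hm, ← hm]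
  · rw [if_neg hm]
    have : ∃ i, m i ≠ 0 := by
      by_contra h'
      push_neg at h'
      apply hm
      ext i
      simp [h' i]
    obtain ⟨i, hi⟩ := this
    have key := coeff_pderiv i f (m - Finsupp.single i 1)
    rw [h i, coeff_zero] at key
    have hle : Finsupp.single i 1 ≤ m := by
      rw [Finsupp.single_le_iff]; omega
    rw [tsub_add_cancel_of_le hle] at key
    have hne : ((((m - Finsupp.single i 1 : σ →₀ ℕ) i + 1 : ℕ)) : L) ≠ 0 :=
      Nat.cast_ne_zero.mpr (Nat.succ_ne_zero _)
    rcases mul_eq_zero.mp key.symm with h' | h'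
    · exact absurd h' hne
    · exact h'

lemma degree_eq_sum (u : σ →₀ ℕ) : u.degree = u.sum fun _ e => e := rfl

lemma homogeneousComponent_totalDegree_ne_zero [CommSemiring R]
    {p : MvPolynomial σ R} (hp : p ≠ 0) :
    homogeneousComponent p.totalDegree p ≠ 0 := by
  obtain ⟨u, hu, hsum⟩ : ∃ u ∈ p.support, p.totalDegree = (u.sum fun _ e => e) :=
    Finset.exists_mem_eq_sup _ (support_nonempty.mpr hp) _
  intro h0
  have := coeff_homogeneousComponent (n := p.totalDegree) (φ := p) u
  rw [h0, coeff_zero] at this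
  have hwt : u.degree = p.totalDegree := by
    rw [hsum, degree_eq_sum]
  rw [if_pos hwt] at this
  exact mem_support_iff.mp hu this.symm

lemma totalDegree_mul_eq {R : Type*} [CommRing R] [IsDomain R] {p q : MvPolynomial σ R}
    (hp : p ≠ 0) (hq : q ≠ 0) :
    (p * q).totalDegree = p.totalDegree + q.totalDegree := by
  classical
  refine le_antisymm (totalDegree_mul p q) ?_
  set d := p.totalDegree with hd
  set e := q.totalDegree with he
  set P := homogeneousComponent d p with hP
  set Q := homogeneousComponent e q with hQ
  have hPQ : P * Q ≠ 0 :=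
    mul_ne_zero (homogeneousComponent_totalDegree_ne_zero hp)
      (homogeneousComponent_totalDegree_ne_zero hq)
  obtain ⟨m, hm⟩ := ne_zero_iff.mp hPQ
  have hhom : (P * Q).IsHomogeneous (d + e) :=
    (homogeneousComponent_isHomogeneous d p).mul (homogeneousComponent_isHomogeneous e q)
  have hmsum : (m.sum fun _ k => k) = d + e := by
    have := hhom hm
    rw [← this, ← degree_eq_sum, Finsupp.degree_eq_weight_one]
    rfl
  have hcoeff : coeff m (p * q) = coeff m (P * Q) := by
    rw [coeff_mul, coeff_mul]
    apply Finset.sum_congr rfl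
    intro x hx
    rw [Finset.HasAntidiagonal.mem_antidiagonal] at hx
    have hsum2 : (x.1.sum fun _ k => k) + (x.2.sum fun _ k => k) = d + e := by
      rw [← hmsum, ← hx, Finsupp.sum_add_index' (fun _ => rfl) (fun _ _ _ => rfl)]
    rw [hP, hQ, coeff_homogeneousComponent, coeff_homogeneousComponent]
    have hw1 : x.1.degree = (x.1.sum fun _ k => k) := degree_eq_sum _
    have hw2 : x.2.degree = (x.2.sum fun _ k => k) := degree_eq_sum _
    by_cases h1 : (x.1.sum fun _ k => k) = d
    · have h2 : (x.2.sum fun _ k => k) = e := by omega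
      rw [if_pos (by rw [hw1, h1]), if_pos (by rw [hw2, h2])]
    · rcases lt_or_gt_of_ne h1 with hlt | hgt
      · have h2 : e < (x.2.sum fun _ k => k) := by omega
        have : coeff x.2 q = 0 :=
          coeff_eq_zero_of_totalDegree_lt (by rw [← he] at *; exact h2)
        rw [this, mul_zero, if_neg (by rw [hw1]; exact h1), zero_mul]
      · have : coeff x.1 p = 0 :=
          coeff_eq_zero_of_totalDegree_lt (by rw [← hd] at *; exact hgt)
        rw [this, zero_mul, if_neg (by rw [hw1]; exact h1), zero_mul]
  have hmem : m ∈ (p * q).support := mem_support_iff.mpr (by rw [hcoeff]; exact hm)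
  have := le_totalDegree hmem
  omega

lemma exists_antideriv {L : Type*} [Field L] [CharZero L] (φ : Polynomial L) :
    ∃ Φ : Polynomial L, Φ.derivative = φ := by
  refine ⟨φ.sum fun n a => Polynomial.C (a / (n + 1)) * Polynomial.X ^ (n + 1), ?_⟩
  conv_rhs => rw [← Polynomial.sum_C_mul_X_pow_eq φ]
  rw [Polynomial.sum, Polynomial.sum, map_sum]
  apply Finset.sum_congr rfl
  intro n _
  rw [Polynomial.derivative_C_mul_X_pow, Nat.add_sub_cancel]
  congr 1
  push_cast
  rw [div_mul_cancel₀]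
  exact Nat.cast_add_one_ne_zero n

end CMWAux

open CMWAux in
/-- **CMW's theorem over an algebraically closed field `L` of characteristic zero.**
If `Jac(A,B)` is a unit of `L[x,y]` and `Jac(A,w) = 0`, then `w ∈ L[A]`. -/
theorem cmw_over_algClosed {L : Type*} [Field L] [IsAlgClosed L] [CharZero L]
    (A B w : MvPolynomial (Fin 2) L)
    (hAB : IsUnit (Jac A B)) (hAw : Jac A w = 0) :
    w ∈ Algebra.adjoin L {A} := by
  obtain ⟨J, hJ⟩ := hAB
  have hJ2 : (↑J⁻¹ : MvPolynomial (Fin 2) L) *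
      (pderiv 0 A * pderiv 1 B - pderiv 1 A * pderiv 0 B) = 1 := by
    have : (↑J⁻¹ : MvPolynomial (Fin 2) L) * ↑J = 1 := J.inv_mul
    rw [hJ] at this
    unfold Jac at this
    exact this
  suffices H : ∀ n (w : MvPolynomial (Fin 2) L), w.totalDegree ≤ n → Jac A w = 0 →
      w ∈ Algebra.adjoin L {A} from H w.totalDegree w le_rfl hAw
  intro n
  induction n with
  | zero =>
    intro w hw _
    have h0 : ∀ i : Fin 2, pderiv i w = 0 := by
      intro i
      by_contra hne
      have := totalDegree_pderiv_lt hne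
      omega
    rw [eq_C_of_pderiv_eq_zero h0, ← algebraMap_eq]
    exact Subalgebra.algebraMap_mem _ _
  | succ n ih =>
    intro w hw hw0
    have e1 : pderiv 0 A * pderiv 1 w = pderiv 1 A * pderiv 0 w := by
      unfold Jac at hw0
      exact sub_eq_zero.mp hw0
    set h : MvPolynomial (Fin 2) L :=
      (↑J⁻¹ : MvPolynomial (Fin 2) L) * (pderiv 1 B * pderiv 0 w - pderiv 0 B * pderiv 1 w)
      with hh_def
    have key0 : h * pderiv 0 A = pderiv 0 w := by
      rw [hh_def]
      linear_combination (-((↑J⁻¹ : MvPolynomial (Fin 2) L) * pderiv 0 B)) * e1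
        + pderiv 0 w * hJ2
    have key1 : h * pderiv 1 A = pderiv 1 w := by
      rw [hh_def]
      linear_combination (-((↑J⁻¹ : MvPolynomial (Fin 2) L) * pderiv 1 B)) * e1
        + pderiv 1 w * hJ2
    have keys : ∀ i : Fin 2, h * pderiv i A = pderiv i w := by
      intro i
      fin_cases i
      · exact key0
      · exact key1
    by_cases hwc : ∀ i : Fin 2, pderiv i w = 0
    · rw [eq_C_of_pderiv_eq_zero hwc, ← algebraMap_eq]
      exact Subalgebra.algebraMap_mem _ _
    · push_neg at hwc
      obtain ⟨i₀, hi₀⟩ := hwc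
      have hh : h ≠ 0 := fun h0 => hi₀ (by rw [← keys i₀, h0, zero_mul])
      have hAi : pderiv i₀ A ≠ 0 := fun h0 => hi₀ (by rw [← keys i₀, h0, mul_zero])
      -- Jac A h = 0
      have hJh : Jac A h = 0 := by
        have d0 := congrArg (pderiv 1) key0
        have d1 := congrArg (pderiv 0) key1
        rw [pderiv_mul] at d0 d1
        have hcW := pderiv_comm' (0 : Fin 2) 1 w
        have hcA := pderiv_comm' (0 : Fin 2) 1 A
        unfold Jac
        linear_combination d0 - d1 - hcW + h * hcA
      -- degree bound
      have hdeg : h.totalDegree ≤ n := by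
        have hne : pderiv i₀ w ≠ 0 := hi₀
        have hlt := totalDegree_pderiv_lt hne
        have heq : (h * pderiv i₀ A).totalDegree = h.totalDegree + (pderiv i₀ A).totalDegree :=
          totalDegree_mul_eq hh hAi
        rw [keys i₀] at heq
        omega
      obtain ⟨φ, hφ⟩ : ∃ φ : Polynomial L, Polynomial.aeval A φ = h := by
        have := ih h hdeg hJh
        rwa [Algebra.adjoin_singleton_eq_range_aeval, AlgHom.mem_range] at this
      obtain ⟨Φ, hΦ⟩ := exists_antideriv φ
      have hv : ∀ i : Fin 2, pderiv i (w - Polynomial.aeval A Φ) = 0 := by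
        intro i
        rw [map_sub, Derivation.map_aeval, hΦ, hφ, smul_eq_mul, ← keys i, sub_self]
      rw [sub_eq_iff_eq_add.mp (eq_C_of_pderiv_eq_zero hv)]
      refine add_mem ?_ ?_
      · rw [← algebraMap_eq]
        exact Subalgebra.algebraMap_mem _ _
      · rw [Algebra.adjoin_singleton_eq_range_aeval]
        exact ⟨Φ, rfl⟩
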